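/- Assume n is odd, n ≥ 3, and a = c ≠ 0. Then: (i) f(f(X)) = 0 for every X ∈ F_{q^2}; (ii) {X ∈ F_{q^2} : f(X) = 0} = {X : X^q = X} ∪ {X : X^q = −X}, with exactly 2q − 1 elements; (iii) the nonzero elements α ∈ F_{q^2} with f^{-1}(α) nonempty are exactly the q − 1 elements α ≠ 0 with α^q = α, and each of these satisfies #f^{-1}(α) = q − 1. -/

import Mathlib

open Polynomial in
lemma stmt12_aux_S_le (q : ℕ) (hq2 : 2 ≤ q) (F : Type*) [Field F] [Fintype F] :
    {x : F | x ^ q = x}.ncard ≤ q := by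
  classical
  have hne : (X ^ q - X : F[X]) ≠ 0 := FiniteField.X_pow_card_sub_X_ne_zero F hq2
  have hsub : {x : F | x ^ q = x} ⊆ ((X ^ q - X : F[X]).roots.toFinset : Set F) := by
    intro x hx
    simp only [Finset.coe_sort_coe, Multiset.mem_toFinset, Finset.mem_coe]
    rw [Polynomial.mem_roots hne]
    simp [Polynomial.IsRoot, hx.out, sub_eq_zero]
  calc {x : F | x ^ q = x}.ncard ≤ ((X ^ q - X : F[X]).roots.toFinset : Set F).ncard :=
        Set.ncard_le_ncard hsub (Set.toFinite _)
    _ = (X ^ q - X : F[X]).roots.toFinset.card := by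
        rw [Set.ncard_coe_finset]
    _ ≤ Multiset.card (X ^ q - X : F[X]).roots := Multiset.toFinset_card_le _
    _ ≤ (X ^ q - X : F[X]).natDegree := Polynomial.card_roots' _
    _ = q := FiniteField.X_pow_card_sub_X_natDegree_eq F hq2

lemma stmt12_aux_hom_card {F : Type*} [AddCommGroup F] (g : F →+ F) :
    Nat.card F = (Set.range g).ncard * {x : F | g x = 0}.ncard := by
  have h1 := AddSubgroup.card_eq_card_quotient_mul_card_addSubgroup g.ker
  have h2 : Nat.card (F ⧸ g.ker) = Nat.card g.range :=
    Nat.card_congr (QuotientAddGroup.quotientKerEquivRange g).toEquiv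
  have h3 : Nat.card g.range = (Set.range g).ncard := by
    rw [← Nat.card_coe_set_eq]; rfl
  have h4 : Nat.card g.ker = ({x : F | g x = 0}).ncard := by
    rw [← Nat.card_coe_set_eq]
    apply Nat.card_congr
    exact Equiv.setCongr (by ext x; simp [AddMonoidHom.mem_ker])
  rw [h1, h2, h3, h4]

lemma stmt12_aux_counts (q : ℕ) (hq2 : 2 ≤ q) (F : Type*) [Field F] [Fintype F]
    (hF : Fintype.card F = q ^ 2)
    (hadd : ∀ x y : F, (x + y) ^ q = x ^ q + y ^ q)
    (hqq : ∀ x : F, (x ^ q) ^ q = x) :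
    {x : F | x ^ q = x}.ncard = q ∧ {x : F | x ^ q = -x}.ncard = q := by
  classical
  set S : Set F := {x | x ^ q = x} with hS
  set K : Set F := {x | x ^ q = -x} with hK
  have hq0 : 0 < q := by omega
  have hneg : ∀ x : F, (-x) ^ q = -x ^ q := by
    intro x
    have := hadd x (-x)
    simp only [add_neg_cancel] at this
    have h0 : (0 : F) ^ q = 0 := zero_pow (by omega)
    rw [h0] at this
    linear_combination -this
  let g : F →+ F := AddMonoidHom.mk' (fun x => x ^ q - x) (by
    intro x y; simp only [hadd]; ring)
  have hkerg : {x : F | g x = 0} = S := by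
    ext x; simp [g, sub_eq_zero, hS]
  have hrg : Set.range g ⊆ K := by
    rintro _ ⟨x, rfl⟩
    show (x ^ q - x) ^ q = -(x ^ q - x)
    rw [sub_eq_add_neg, hadd, hneg, hqq]; ring
  have hcard : q ^ 2 = (Set.range g).ncard * S.ncard := by
    rw [← hkerg, ← stmt12_aux_hom_card g, Nat.card_eq_fintype_card, hF]
  have hSle : S.ncard ≤ q := stmt12_aux_S_le q hq2 F
  have hSpos : 0 < S.ncard := by
    rcases Nat.eq_zero_or_pos S.ncard with h | h
    · rw [h, mul_zero] at hcard
      have : 0 < q ^ 2 := by positivity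
      omega
    · exact h
  have hrge : q ≤ (Set.range g).ncard := by
    nlinarith [hcard, hSle, hSpos]
  have hKge : q ≤ K.ncard := le_trans hrge (Set.ncard_le_ncard hrg (Set.toFinite _))
  obtain ⟨t0, ht0K, ht0⟩ : ∃ t0 ∈ K, t0 ≠ (0 : F) := by
    have : 1 < K.ncard := by omega
    exact Set.exists_ne_of_one_lt_ncard this 0
  have ht0q : t0 ^ q = -t0 := ht0K
  have hKeq : K = (fun x => t0 * x) '' S := by
    ext u
    constructor
    · intro hu
      refine ⟨t0⁻¹ * u, ?_, by field_simp⟩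
      show (t0⁻¹ * u) ^ q = t0⁻¹ * u
      rw [mul_pow, inv_pow, ht0q, hu.out]
      field_simp
    · rintro ⟨x, hx, rfl⟩
      show (t0 * x) ^ q = -(t0 * x)
      rw [mul_pow, ht0q, hx.out]; ring
  have hKS : K.ncard = S.ncard := by
    rw [hKeq, Set.ncard_image_of_injective _ (mul_right_injective₀ ht0)]
  have hSq : S.ncard = q := by
    nlinarith [hcard, Set.ncard_le_ncard hrg (Set.toFinite _), hKS, hSle]
  exact ⟨hSq, by omega⟩

/-- `n` odd, `n ≥ 3`, `a = c ≠ 0`. Then (i) `f ∘ f ≡ 0`;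
(ii) the zero set of `f` is `{X : X^q = X} ∪ {X : X^q = -X}` with `2q - 1` elements;
(iii) the nonzero `α` with nonempty preimage are exactly the `q - 1` nonzero elements of
`F_q`, each with preimage of size `q - 1`. -/
theorem stmt_12 (p s q : ℕ) (hp : p.Prime) (hpodd : p ≠ 2) (hs : 0 < s) (hq : q = p ^ s)
    (F : Type*) [Field F] [Fintype F] (hF : Fintype.card F = q ^ 2)
    (a c : F) (ha : a ^ q = a) (hc : c ^ q = c)
    (n : ℕ) (hn3 : 3 ≤ n) (hnodd : Odd n)
    (hac : a = c) (hc0 : c ≠ 0)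
    (f : F → F) (hf : ∀ X, f X = (c * X ^ q + a * X) * (X ^ q - X) ^ (n - 1)) :
    (∀ X : F, f (f X) = 0) ∧
    ({X : F | f X = 0} = {X : F | X ^ q = X} ∪ {X : F | X ^ q = -X} ∧
      {X : F | f X = 0}.ncard = 2 * q - 1) ∧
    ({α : F | α ≠ 0 ∧ (f ⁻¹' {α}).Nonempty} = {α : F | α ≠ 0 ∧ α ^ q = α} ∧
      {α : F | α ≠ 0 ∧ α ^ q = α}.ncard = q - 1 ∧
      ∀ α : F, α ≠ 0 → α ^ q = α → (f ⁻¹' {α}).ncard = q - 1) := by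
  classical
  haveI : Fact p.Prime := ⟨hp⟩
  have hp3 : 3 ≤ p := by
    have := hp.two_le; omega
  -- the characteristic of F is p
  haveI hcharp : CharP F p := by
    obtain ⟨m, hrp, hcard⟩ := FiniteField.card F (ringChar F)
    have hdvd : ringChar F ∣ p ^ (s * 2) := by
      have : (ringChar F) ^ (m : ℕ) = p ^ (s * 2) := by
        rw [← hcard, hF, hq, ← pow_mul]
      rw [← this]
      exact dvd_pow_self _ (by exact_mod_cast m.pos.ne')
    have : ringChar F = p :=
      ((Nat.prime_dvd_prime_iff_eq hrp hp).mp (hrp.dvd_of_dvd_pow hdvd))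
    rw [← this]
    exact ringChar.charP F
  have hq2 : 2 ≤ q := by
    rw [hq]
    calc 2 ≤ p := by omega
      _ = p ^ 1 := (pow_one p).symm
      _ ≤ p ^ s := Nat.pow_le_pow_right (by omega) hs
  have hq0 : q ≠ 0 := by omega
  have hadd : ∀ x y : F, (x + y) ^ q = x ^ q + y ^ q := by
    intro x y; rw [hq]; exact add_pow_char_pow ..
  have hqq : ∀ x : F, (x ^ q) ^ q = x := by
    intro x
    rw [← pow_mul, ← sq, ← hF]
    exact FiniteField.pow_card x
  have hqodd : Odd q := by
    rw [hq]; exact (hp.odd_of_ne_two hpodd).pow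
  have hneg : ∀ x : F, (-x) ^ q = -x ^ q := fun x => hqodd.neg_pow x
  have hsubq : ∀ x y : F, (x - y) ^ q = x ^ q - y ^ q := by
    intro x y; rw [sub_eq_add_neg, hadd, hneg]; ring
  have two_ne : (2 : F) ≠ 0 := by
    intro h
    have h2 : ((2 : ℕ) : F) = 0 := by exact_mod_cast h
    have := (CharP.cast_eq_zero_iff F p 2).mp h2
    have := Nat.le_of_dvd (by norm_num) this
    omega
  have hevn : Even (n - 1) := Nat.Odd.sub_odd hnodd odd_one
  have hn1 : n - 1 ≠ 0 := by omega
  have h2q : (2 : F) ^ q = 2 := by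
    have := hadd 1 1; norm_num at this; linear_combination this
  -- f maps into F_q
  have hfq : ∀ X : F, (f X) ^ q = f X := by
    intro X
    rw [hf, hac, mul_pow, ← pow_mul, mul_comm (n - 1) q, pow_mul, hsubq, hqq, hadd,
      mul_pow, mul_pow, hc, hqq]
    have hx : X - X ^ q = -(X ^ q - X) := by ring
    rw [hx, hevn.neg_pow]
    ring
  have hzero : ∀ y : F, y ^ q = y → f y = 0 := by
    intro y hy
    rw [hf, hy]
    simp [sub_self, zero_pow hn1]
  have part1 : ∀ X : F, f (f X) = 0 := fun X => hzero _ (hfq X)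
  set S : Set F := {x : F | x ^ q = x} with hS
  set K : Set F := {x : F | x ^ q = -x} with hK
  obtain ⟨hScard0, hKcard0⟩ := stmt12_aux_counts q hq2 F hF hadd hqq
  have hScard : S.ncard = q := hScard0
  have hKcard : K.ncard = q := hKcard0
  have h0S : (0 : F) ∈ S := by simp [hS, zero_pow hq0]
  have h0K : (0 : F) ∈ K := by simp [hK, zero_pow hq0]
  -- zero set
  have hzset : {X : F | f X = 0} = S ∪ K := by
    ext X
    simp only [Set.mem_setOf_eq, Set.mem_union, hf, hac, hS, hK]
    rw [mul_eq_zero, pow_eq_zero_iff hn1, sub_eq_zero]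
    constructor
    · rintro (h | h)
      · right
        have hcc : c * (X ^ q + X) = 0 := by linear_combination h
        rcases mul_eq_zero.mp hcc with h' | h'
        · exact absurd h' hc0
        · linear_combination h'
      · left; exact h
    · rintro (h | h)
      · right; exact h
      · left; rw [h]; ring
  have hSK : S ∩ K = {0} := by
    ext x
    simp only [Set.mem_inter_iff, Set.mem_singleton_iff, hS, hK, Set.mem_setOf_eq]
    constructor
    · rintro ⟨h1, h2⟩
      have h3 : 2 * x = 0 := by linear_combination h2 - h1
      rcases mul_eq_zero.mp h3 with h | h
      · exact absurd h two_ne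
      · exact h
    · rintro rfl
      exact ⟨by rw [zero_pow hq0], by rw [zero_pow hq0, neg_zero]⟩
  have hcount2 : {X : F | f X = 0}.ncard = 2 * q - 1 := by
    rw [hzset]
    have := Set.ncard_union_add_ncard_inter S K (Set.toFinite _) (Set.toFinite _)
    rw [hSK, Set.ncard_singleton, hScard, hKcard] at this
    omega
  -- a nonzero element of K
  obtain ⟨t0, ht0K, ht0⟩ : ∃ t0 ∈ K, t0 ≠ (0 : F) := by
    have : 1 < K.ncard := by omega
    exact Set.exists_ne_of_one_lt_ncard this 0
  -- key computation
  have key : ∀ u t : F, u ^ q = u → t ^ q = -t →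
      f (u + t) = c * 2 ^ n * (u * t ^ (n - 1)) := by
    intro u t hu ht
    rw [hf, hac, hadd, hu, ht]
    have h1 : u + -t - (u + t) = -(2 * t) := by ring
    rw [h1, hevn.neg_pow, mul_pow]
    have h2 : (2 : F) ^ n = 2 ^ (n - 1) * 2 := by
      rw [← pow_succ, Nat.sub_add_cancel (by omega)]
    rw [h2]; ring
  have hdne : ∀ t : F, t ≠ 0 → c * 2 ^ n * t ^ (n - 1) ≠ 0 := by
    intro t ht
    exact mul_ne_zero (mul_ne_zero hc0 (pow_ne_zero _ two_ne)) (pow_ne_zero _ ht)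
  have htpow : ∀ t : F, t ^ q = -t → (t ^ (n - 1)) ^ q = t ^ (n - 1) := by
    intro t ht
    rw [← pow_mul, mul_comm, pow_mul, ht, hevn.neg_pow]
  have hdpow : ∀ t : F, t ^ q = -t → (c * 2 ^ n * t ^ (n - 1)) ^ q = c * 2 ^ n * t ^ (n - 1) := by
    intro t ht
    rw [mul_pow, mul_pow, hc, ← pow_mul, mul_comm n q, pow_mul, h2q, htpow t ht]
  -- fiber description
  have fiber : ∀ α : F, α ≠ 0 → α ^ q = α →
      f ⁻¹' {α} = (fun t => α / (c * 2 ^ n * t ^ (n - 1)) + t) '' (K \ {0}) := by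
    intro α hα0 hαq
    ext X
    simp only [Set.mem_preimage, Set.mem_singleton_iff, Set.mem_image, Set.mem_diff,
      Set.mem_singleton_iff, hK, Set.mem_setOf_eq]
    constructor
    · intro hX
      set t : F := (X - X ^ q) / 2 with htdef
      set u : F := (X + X ^ q) / 2 with hudef
      have hXst : X = u + t := by rw [hudef, htdef, ← add_div, eq_div_iff two_ne]; ring
      have hu : u ^ q = u := by
        rw [hudef, div_pow, hadd, hqq, h2q]; ring_nf
      have ht : t ^ q = -t := by
        rw [htdef, div_pow, hsubq, hqq, h2q]; ring_nf
      have htne : t ≠ 0 := by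
        intro h
        have hXq : X ^ q = X := by
          have := (div_eq_zero_iff.mp (htdef ▸ h)).resolve_right two_ne
          linear_combination -this
        exact hα0 (by rw [← hX, hzero X hXq])
      refine ⟨t, ⟨ht, htne⟩, ?_⟩
      have hfX : f X = c * 2 ^ n * (u * t ^ (n - 1)) := by
        rw [hXst] at hX ⊢; exact key u t hu ht
      have hueq : u = α / (c * 2 ^ n * t ^ (n - 1)) := by
        rw [eq_div_iff (hdne t htne)]
        rw [hfX] at hX
        linear_combination hX
      rw [← hueq, ← hXst]
    · rintro ⟨t, ⟨ht, htne⟩, rfl⟩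
      have husq : (α / (c * 2 ^ n * t ^ (n - 1))) ^ q = α / (c * 2 ^ n * t ^ (n - 1)) := by
        rw [div_pow, hαq, hdpow t ht]
      rw [key _ t husq ht]
      field_simp
  have hinj : ∀ α : F, α ≠ 0 → α ^ q = α →
      Set.InjOn (fun t => α / (c * 2 ^ n * t ^ (n - 1)) + t) (K \ {0}) := by
    intro α hα0 hαq t1 ht1 t2 ht2 h
    simp only [Set.mem_diff, Set.mem_singleton_iff, hK, Set.mem_setOf_eq] at ht1 ht2
    replace h : α / (c * 2 ^ n * t1 ^ (n - 1)) + t1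
        = α / (c * 2 ^ n * t2 ^ (n - 1)) + t2 := h
    have e1 : (α / (c * 2 ^ n * t1 ^ (n - 1)) + t1) ^ q
        = α / (c * 2 ^ n * t1 ^ (n - 1)) - t1 := by
      rw [hadd, div_pow, hαq, hdpow t1 ht1.1, ht1.1]; ring
    have e2 : (α / (c * 2 ^ n * t2 ^ (n - 1)) + t2) ^ q
        = α / (c * 2 ^ n * t2 ^ (n - 1)) - t2 := by
      rw [hadd, div_pow, hαq, hdpow t2 ht2.1, ht2.1]; ring
    have hq' : (α / (c * 2 ^ n * t1 ^ (n - 1)) + t1) ^ q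
        = (α / (c * 2 ^ n * t2 ^ (n - 1)) + t2) ^ q := by rw [h]
    rw [e1, e2] at hq'
    have h2t : 2 * t1 = 2 * t2 := by
      linear_combination h - hq'
    exact mul_left_cancel₀ two_ne h2t
  -- part (iii) set equality
  have part3a : {α : F | α ≠ 0 ∧ (f ⁻¹' {α}).Nonempty} = {α : F | α ≠ 0 ∧ α ^ q = α} := by
    ext α
    simp only [Set.mem_setOf_eq]
    constructor
    · rintro ⟨hα0, X, hX⟩
      simp only [Set.mem_preimage, Set.mem_singleton_iff] at hX
      exact ⟨hα0, by rw [← hX]; exact hfq X⟩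
    · rintro ⟨hα0, hαq⟩
      refine ⟨hα0, ?_⟩
      rw [fiber α hα0 hαq]
      exact ⟨_, ⟨t0, ⟨ht0K, ht0⟩, rfl⟩⟩
  have hKdiff : (K \ {0}).ncard = q - 1 := by
    rw [Set.ncard_diff_singleton_of_mem h0K, hKcard]
  have part3b : {α : F | α ≠ 0 ∧ α ^ q = α}.ncard = q - 1 := by
    have hBe : {α : F | α ≠ 0 ∧ α ^ q = α} = S \ {0} := by
      ext α
      simp only [Set.mem_setOf_eq, Set.mem_diff, Set.mem_singleton_iff, hS]
      tauto
    rw [hBe, Set.ncard_diff_singleton_of_mem h0S, hScard]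
  have part3c : ∀ α : F, α ≠ 0 → α ^ q = α → (f ⁻¹' {α}).ncard = q - 1 := by
    intro α hα0 hαq
    rw [fiber α hα0 hαq, Set.ncard_image_of_injOn (hinj α hα0 hαq), hKdiff]
  exact ⟨part1, ⟨hzset, hcount2⟩, ⟨part3a, part3b, part3c⟩⟩
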